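/- Let G be a finite connected simple graph with minimum degree at least 2. Then either G is 2-connected, or G is an (H₁,H₂)-dumbbell for some connected graphs H₁ and H₂ each of minimum degree at least 2. -/

import Mathlib

open SimpleGraph

section Helpers
variable {V : Type*} {G : SimpleGraph V}

lemma reach_coe_induce {S : Set V} :
    ∀ {a b : V} (p : G.Walk a b), (∀ v ∈ p.support, v ∈ S) → ∀ (ha : a ∈ S) (hb : b ∈ S),
    ((⊤ : G.Subgraph).induce S).coe.Reachable ⟨a, ha⟩ ⟨b, hb⟩
  | _, _, Walk.nil, _, _, _ => Reachable.refl _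
  | _, _, @Walk.cons _ _ a u b h p, hp, ha, hb => by
    have hu : u ∈ S := hp _ (by simp [Walk.support_cons])
    refine Reachable.trans (Adj.reachable ?_)
      (reach_coe_induce p (fun v hv => hp v (by simp [Walk.support_cons, hv])) hu hb)
    show ((⊤ : G.Subgraph).induce S).Adj a u
    simp [Subgraph.induce_adj, ha, hu, h]

lemma reach_induce {S : Set V} :
    ∀ {a b : V} (p : G.Walk a b), (∀ v ∈ p.support, v ∈ S) → ∀ (ha : a ∈ S) (hb : b ∈ S),
    (G.induce S).Reachable ⟨a, ha⟩ ⟨b, hb⟩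
  | _, _, Walk.nil, _, _, _ => Reachable.refl _
  | _, _, @Walk.cons _ _ a u b h p, hp, ha, hb => by
    have hu : u ∈ S := hp _ (by simp [Walk.support_cons])
    refine Reachable.trans (Adj.reachable ?_)
      (reach_induce p (fun v hv => hp v (by simp [Walk.support_cons, hv])) hu hb)
    show (G.induce S).Adj ⟨a, ha⟩ ⟨u, hu⟩
    simpa using h

lemma exists_adj_of_walk {A : Set V} {v : V}
    (hcl : ∀ a ∈ A, ∀ z, G.Adj a z → z ∈ insert v A) :
    ∀ {u t : V} (_ : G.Walk u t), t ∈ A → u ∉ A → ∃ z ∈ A, G.Adj v z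
  | _, _, Walk.nil, ht, hu => absurd ht hu
  | _, _, @Walk.cons _ _ u u' t h p, ht, hu => by
    by_cases hu' : u' ∈ A
    · have := hcl u' hu' u h.symm
      rcases this with h1 | h1
      · exact ⟨u', hu', h1 ▸ h⟩
      · exact absurd h1 hu
    · exact exists_adj_of_walk hcl p ht hu'

lemma start_mem_of_walk {B : Set V} {c : V}
    (hcl : ∀ b ∈ B, ∀ z, G.Adj b z → z ∈ insert c B) :
    ∀ {u t : V} (p : G.Walk u t), t ∈ B → c ∉ p.support → u ∈ B
  | _, _, Walk.nil, ht, _ => ht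
  | _, _, @Walk.cons _ _ u u' t h p, ht, hc => by
    have hu' : u' ∈ B := start_mem_of_walk hcl p ht (fun hm => hc (by simp [Walk.support_cons, hm]))
    have := hcl u' hu' u h.symm
    rcases this with h1 | h1
    · subst h1; exact absurd (Walk.start_mem_support (Walk.cons h p)) hc
    · exact h1

lemma path_support_subset {B : Set V} {c : V}
    (hcl : ∀ b ∈ B, ∀ z, G.Adj b z → z ∈ insert c B) :
    ∀ {a t : V} (p : G.Walk a t), p.IsPath → a ∈ insert c B → t ∈ B →
      ∀ v ∈ p.support, v ∈ insert c B
  | _, _, Walk.nil, _, ha, _, v, hv => by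
    simp only [Walk.support_nil, List.mem_singleton] at hv; exact hv ▸ ha
  | _, _, @Walk.cons _ _ a u t h p, hp, ha, ht, v, hv => by
    rw [Walk.support_cons, List.mem_cons] at hv
    rcases hv with rfl | hv
    · exact ha
    rcases ha with rfl | ha
    · -- a = c, so c ∉ p.support, hence u ∈ B
      have hcp : a ∉ p.support := ((Walk.cons_isPath_iff h p).mp hp).2
      have hu : u ∈ B := start_mem_of_walk hcl p ht hcp
      exact path_support_subset hcl p hp.of_cons (Or.inr hu) ht v hv
    · have hu' : u ∈ insert c B := hcl _ ha u h
      exact path_support_subset hcl p hp.of_cons hu' ht v hv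

variable [DecidableEq V]

lemma setconn_insert {B : Set V} {c : V} (hconn : G.Connected)
    (hcl : ∀ b ∈ B, ∀ z, G.Adj b z → z ∈ insert c B) :
    ∀ a ∈ insert c B, ∀ b ∈ insert c B,
      ∃ p : G.Walk a b, p.IsPath ∧ ∀ v ∈ p.support, v ∈ insert c B := by
  have key : ∀ a ∈ insert c B, ∀ b ∈ B, ∃ p : G.Walk a b, p.IsPath ∧
      ∀ v ∈ p.support, v ∈ insert c B := by
    intro a ha b hb
    obtain ⟨q⟩ := hconn a b
    exact ⟨q.toPath, q.toPath.2, path_support_subset hcl q.toPath q.toPath.2 ha hb⟩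
  intro a ha b hb
  rcases hb with rfl | hb
  · rcases ha with rfl | ha
    · exact ⟨Walk.nil, by simp, by simp⟩
    · obtain ⟨p, hpp, hp⟩ := key b (Or.inl rfl) a ha
      exact ⟨p.reverse, hpp.reverse, fun v hv => hp v (by rwa [Walk.support_reverse, List.mem_reverse] at hv)⟩
  · exact key a ha b hb

lemma two_nbrs {a b : V} {p : G.Walk a b} (hp : p.IsPath) {c : V}
    (hc : c ∈ p.support) (hca : c ≠ a) (hcb : c ≠ b) :
    ∃ u1 u2, u1 ≠ u2 ∧ G.Adj c u1 ∧ G.Adj c u2 ∧ u1 ∈ p.support ∧ u2 ∈ p.support := by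
  classical
  have hspec : (p.takeUntil c hc).append (p.dropUntil c hc) = p := p.take_spec hc
  set q1 := p.takeUntil c hc with hq1
  set q2 := p.dropUntil c hc with hq2
  have hq2nn : ¬ q2.Nil := Walk.not_nil_of_ne hcb
  have hq1nn : ¬ q1.reverse.Nil := Walk.not_nil_of_ne hca
  obtain ⟨u2, h2, q2', hq2'⟩ := Walk.not_nil_iff.mp hq2nn
  obtain ⟨u1, h1, q1', hq1'⟩ := Walk.not_nil_iff.mp hq1nn
  have hu1mem : u1 ∈ q1.support := by
    have : u1 ∈ q1.reverse.support := by rw [hq1']; simp [Walk.support_cons]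
    rwa [Walk.support_reverse, List.mem_reverse] at this
  have hu2tail : u2 ∈ q2.support.tail := by
    rw [hq2']; simp [Walk.support_cons]
  have hnodup : (q1.support ++ q2.support.tail).Nodup := by
    rw [← Walk.support_append, hspec]; exact hp.support_nodup
  have hdisj := List.disjoint_of_nodup_append hnodup
  refine ⟨u1, u2, fun he => hdisj hu1mem (he ▸ hu2tail), h1, h2, ?_, ?_⟩
  · rw [← hspec, Walk.mem_support_append_iff]; exact Or.inl hu1mem
  · rw [← hspec, Walk.mem_support_append_iff]
    right
    rw [hq2']; simp [Walk.support_cons]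
lemma claim [Fintype V] (hconn : G.Connected) (hdeg : ∀ v : V, 2 ≤ (G.neighborSet v).ncard) :
    ∀ (n : ℕ) (B : Set V) (c : V), B.ncard ≤ n → c ∉ B → B.Nonempty →
    (∀ b ∈ B, ∀ z, G.Adj b z → z ∈ insert c B) →
    (∃ b ∈ B, G.Adj c b) →
    ∃ (y : V) (P : G.Walk c y) (S : Set V),
      P.IsPath ∧
      (∀ v ∈ P.support, v ∈ insert c B) ∧
      S ⊆ insert c B ∧
      y ∈ S ∧
      (∀ v ∈ S, v ∈ P.support → v = y) ∧
      (∀ v ∈ insert c B, v ∈ S ∨ v ∈ P.support) ∧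
      (∀ v ∈ P.support, v ≠ c → v ≠ y → (G.neighborSet v).ncard = 2) ∧
      (¬ P.Nil → c ∉ S ∧ (G.neighborSet c ∩ B).ncard = 1) ∧
      (∀ v ∈ S, 2 ≤ (G.neighborSet v ∩ S).ncard) ∧
      (∀ u v, G.Adj u v → v ∈ B → (u ∈ S ∧ v ∈ S) ∨ P.toSubgraph.Adj u v) ∧
      (∀ a ∈ S, ∀ b ∈ S, ∃ p : G.Walk a b, ∀ v ∈ p.support, v ∈ S) := by
  intro n
  induction n with
  | zero =>
    intro B c hcard _ hne _ _
    rw [Nat.le_zero, Set.ncard_eq_zero (Set.toFinite B)] at hcard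
    exact absurd hcard (Set.nonempty_iff_ne_empty.mp hne)
  | succ n ih =>
    intro B c hcard hcB hne hcl hc
    by_cases he : 2 ≤ (G.neighborSet c ∩ B).ncard
    · -- trivial handle at c, plate is everything
      refine ⟨c, Walk.nil, insert c B, Walk.IsPath.nil, by simp, le_refl _, Set.mem_insert _ _,
        fun v _ hv => by simpa using hv, fun v hv => Or.inl hv,
        fun v hv hvc _ => absurd (by simpa using hv) hvc,
        fun hnil => absurd Walk.nil_nil hnil, ?_, ?_, ?_⟩
      · intro v hv
        rcases hv with rfl | hv
        · calc 2 ≤ (G.neighborSet v ∩ B).ncard := he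
            _ ≤ (G.neighborSet v ∩ insert v B).ncard :=
              Set.ncard_le_ncard (Set.inter_subset_inter_right _ (Set.subset_insert _ _))
                (Set.toFinite _)
        · have : G.neighborSet v ∩ insert c B = G.neighborSet v := by
            apply Set.inter_eq_left.mpr
            intro z hz
            exact hcl v hv z hz
          rw [this]; exact hdeg v
      · intro u v huv hv
        exact Or.inl ⟨hcl v hv u huv.symm, Set.mem_insert_iff.mpr (Or.inr hv)⟩
      · intro a ha b hb
        obtain ⟨p, _, hp⟩ := setconn_insert hconn hcl a ha b hb
        exact ⟨p, hp⟩
    · -- c has exactly one neighbor w in B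
      have h1 : (G.neighborSet c ∩ B).ncard = 1 := by
        have h0 : 1 ≤ (G.neighborSet c ∩ B).ncard := by
          obtain ⟨b, hb, hab⟩ := hc
          exact (Set.ncard_pos (Set.toFinite _)).mpr ⟨b, hab, hb⟩
        omega
      obtain ⟨w, hw⟩ := Set.ncard_eq_one.mp h1
      have hwB : w ∈ B := by have : w ∈ G.neighborSet c ∩ B := hw ▸ rfl; exact this.2
      have hcw : G.Adj c w := by have : w ∈ G.neighborSet c ∩ B := hw ▸ rfl; exact this.1
      have huniq : ∀ z, G.Adj c z → z ∈ B → z = w := fun z h1' h2' => by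
        have : z ∈ G.neighborSet c ∩ B := ⟨h1', h2'⟩
        rwa [hw] at this
      by_cases hw3 : 3 ≤ (G.neighborSet w).ncard
      · -- plate is B, handle is the edge c-w
        refine ⟨w, Walk.cons hcw Walk.nil, B, ?_, ?_, Set.subset_insert _ _, hwB, ?_, ?_, ?_,
          fun _ => ⟨hcB, h1⟩, ?_, ?_, ?_⟩
        · rw [Walk.cons_isPath_iff]
          exact ⟨Walk.IsPath.nil, by simp [hcw.ne]⟩
        · intro v hv
          simp only [Walk.support_cons, Walk.support_nil, List.mem_cons, List.mem_singleton] at hv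
          rcases hv with rfl | rfl | h
          · exact Set.mem_insert _ _
          · exact Set.mem_insert_iff.mpr (Or.inr hwB)
          · exact absurd h (by simp)
        · intro v hv hsup
          simp only [Walk.support_cons, Walk.support_nil, List.mem_cons, List.mem_singleton] at hsup
          rcases hsup with rfl | rfl | h
          · exact absurd hv hcB
          · rfl
          · exact absurd h (by simp)
        · intro v hv
          rcases hv with rfl | hv
          · exact Or.inr (by simp [Walk.support_cons])
          · exact Or.inl hv
        · intro v hv hvc hvw
          simp only [Walk.support_cons, Walk.support_nil, List.mem_cons, List.mem_singleton] at hv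
          rcases hv with rfl | rfl | h
          · exact absurd rfl hvc
          · exact absurd rfl hvw
          · exact absurd h (by simp)
        · intro v hv
          by_cases hvw : v = w
          · subst hvw
            have hEq : G.neighborSet v ∩ B = G.neighborSet v \ {c} := by
              ext z
              constructor
              · rintro ⟨hz1, hz2⟩
                exact ⟨hz1, fun hzc => hcB (by rwa [Set.mem_singleton_iff.mp hzc] at hz2)⟩
              · rintro ⟨hz1, hz2⟩
                refine ⟨hz1, ?_⟩
                have := hcl v hv z hz1
                rcases this with rfl | h
                · exact absurd rfl hz2
                · exact h
            rw [hEq, Set.ncard_diff_singleton_of_mem (by exact hcw.symm)]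
            omega
          · have hEq : G.neighborSet v ∩ B = G.neighborSet v := by
              apply Set.inter_eq_left.mpr
              intro z hz
              have := hcl v hv z hz
              rcases this with rfl | h
              · exact absurd (huniq v hz.symm hv) hvw
              · exact h
            rw [hEq]; exact hdeg v
        · intro u v huv hv
          have hu : u ∈ insert c B := hcl v hv u huv.symm
          rcases hu with rfl | hu
          · have : v = w := huniq v huv hv
            subst this
            exact Or.inr (by simp)
          · exact Or.inl ⟨hu, hv⟩
        · intro a ha b hb
          obtain ⟨p, hpath, hp⟩ := setconn_insert hconn hcl a (Set.mem_insert_iff.mpr (Or.inr ha))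
            b (Set.mem_insert_iff.mpr (Or.inr hb))
          by_cases hcp : c ∈ p.support
          · exfalso
            have hca : c ≠ a := fun h => hcB (h ▸ ha)
            have hcb : c ≠ b := fun h => hcB (h ▸ hb)
            obtain ⟨u1, u2, hu12, h1', h2', hm1, hm2⟩ := two_nbrs hpath hcp hca hcb
            have hu1B : u1 ∈ B := by
              rcases hp u1 hm1 with rfl | h
              · exact absurd rfl h1'.ne'
              · exact h
            have hu2B : u2 ∈ B := by
              rcases hp u2 hm2 with rfl | h
              · exact absurd rfl h2'.ne'
              · exact h
            exact hu12 ((huniq u1 h1' hu1B).trans (huniq u2 h2' hu2B).symm)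
          · refine ⟨p, fun v hv => ?_⟩
            rcases hp v hv with rfl | h
            · exact absurd hv hcp
            · exact h
      · -- w has degree exactly 2: extend the handle through w
        have hw2 : (G.neighborSet w).ncard = 2 := le_antisymm (by omega) (hdeg w)
        obtain ⟨x1, x2, hx12, hxs⟩ := Set.ncard_eq_two.mp hw2
        have hcmem : c ∈ G.neighborSet w := hcw.symm
        -- let w2 be the other neighbor of w
        obtain ⟨w2, hNw, hw2c⟩ : ∃ w2, G.neighborSet w = {c, w2} ∧ w2 ≠ c := by
          rw [hxs] at hcmem
          rcases hcmem with rfl | rfl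
          · exact ⟨x2, hxs, fun h => hx12 h.symm⟩
          · exact ⟨x1, by rw [hxs, Set.pair_comm], hx12⟩
        have hww2 : G.Adj w w2 := by
          have : w2 ∈ G.neighborSet w := by rw [hNw]; exact Or.inr rfl
          exact this
        have hw2B : w2 ∈ B := by
          have := hcl w hwB w2 hww2
          rcases this with rfl | h
          · exact absurd rfl hw2c
          · exact h
        have hw2w : w2 ≠ w := hww2.ne'
        set B' := B \ {w} with hB'
        have hIns : insert w B' = B := by
          rw [hB', Set.insert_diff_singleton, Set.insert_eq_self.mpr hwB]
        have hcard' : B'.ncard ≤ n := by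
          have : B'.ncard = B.ncard - 1 := Set.ncard_diff_singleton_of_mem hwB
          have hB1 : 1 ≤ B.ncard := (Set.ncard_pos (Set.toFinite _)).mpr ⟨w, hwB⟩
          omega
        have hcl' : ∀ b ∈ B', ∀ z, G.Adj b z → z ∈ insert w B' := by
          intro b hb z hz
          have := hcl b hb.1 z hz
          rcases this with rfl | h
          · exact absurd (huniq b hz.symm hb.1) hb.2
          · rw [hIns]; exact h
        obtain ⟨y, P', S, hP1, hP2, hS3, hy4, h5, h6, h7, h8, h9, h10, h11⟩ :=
          ih B' w hcard' (by simp [hB']) ⟨w2, hw2B, hw2w⟩ hcl' ⟨w2, ⟨hw2B, hw2w⟩, hww2⟩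
        have hPsupB : ∀ v ∈ P'.support, v ∈ B := by
          intro v hv
          have := hP2 v hv
          rwa [hIns] at this
        have hcP' : c ∉ P'.support := fun h => hcB (hPsupB c h)
        have hSB : S ⊆ B := hIns ▸ hS3
        refine ⟨y, Walk.cons hcw P', S, hP1.cons hcP', ?_, fun v hv => Set.mem_insert_iff.mpr
          (Or.inr (hSB hv)), hy4, ?_, ?_, ?_, fun _ => ⟨fun h => hcB (hSB h), h1⟩, h9, ?_, h11⟩
        · intro v hv
          rw [Walk.support_cons, List.mem_cons] at hv
          rcases hv with rfl | hv
          · exact Set.mem_insert _ _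
          · exact Set.mem_insert_iff.mpr (Or.inr (hPsupB v hv))
        · intro v hv hsup
          rw [Walk.support_cons, List.mem_cons] at hsup
          rcases hsup with rfl | hsup
          · exact absurd (hSB hv) hcB
          · exact h5 v hv hsup
        · intro v hv
          rcases hv with rfl | hv
          · exact Or.inr (by simp [Walk.support_cons])
          · have := h6 v (hIns ▸ hv)
            rcases this with h | h
            · exact Or.inl h
            · exact Or.inr (by rw [Walk.support_cons]; exact List.mem_cons_of_mem _ h)
        · intro v hv hvc hvy
          rw [Walk.support_cons, List.mem_cons] at hv
          rcases hv with rfl | hv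
          · exact absurd rfl hvc
          by_cases hvw : v = w
          · subst hvw; exact hw2
          · exact h7 v hv hvw hvy
        · intro u v huv hv
          rw [← hIns] at hv
          rcases hv with rfl | hv
          · -- v = w
            have hu : u ∈ G.neighborSet v := huv.symm
            rw [hNw] at hu
            rcases hu with rfl | rfl
            · exact Or.inr (by simp)
            · -- u = w2 : use rec for edge (w, w2)
              have := h10 v _ huv.symm ⟨hw2B, hw2w⟩
              rcases this with ⟨ha, hb⟩ | h
              · exact Or.inl ⟨hb, ha⟩
              · exact Or.inr (by simp only [Walk.toSubgraph]; exact Or.inr h.symm)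
          · have := h10 u v huv hv
            rcases this with h | h
            · exact Or.inl h
            · exact Or.inr (by simp only [Walk.toSubgraph]; exact Or.inr h)

end Helpers
/-- `G` is 2-connected: connected, at least 3 vertices, and no cut vertex,
i.e. deleting any vertex leaves the graph connected. -/
def TwoConnected {V : Type*} [Fintype V] (G : SimpleGraph V) : Prop :=
  G.Connected ∧ 3 ≤ Fintype.card V ∧ ∀ v : V, (G.induce {u | u ≠ v}).Connected

/-- `G` is an `(H₁,H₂)`-dumbbell with plates the subgraphs `H₁` and `H₂`:
the plates have at most one vertex in common, and `G` is the union of `H₁`, `H₂` and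
a path `P` (the handle, with at least one vertex) that is binary in `G` (all its
internal vertices have degree 2 in `G`), where each plate meets `P` in exactly one
vertex, which is an end-vertex of `P`, and the plates are vertex disjoint whenever
`P` has at least two vertices. -/
def IsDumbbell {V : Type*} (G : SimpleGraph V) (H₁ H₂ : G.Subgraph) : Prop :=
  (H₁.verts ∩ H₂.verts).Subsingleton ∧
  ∃ (x y : V) (P : G.Walk x y),
    P.IsPath ∧
    (∀ v ∈ P.support, v ≠ x → v ≠ y → (G.neighborSet v).ncard = 2) ∧
    H₁ ⊔ H₂ ⊔ P.toSubgraph = ⊤ ∧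
    H₁.verts ∩ {v | v ∈ P.support} = {x} ∧
    H₂.verts ∩ {v | v ∈ P.support} = {y} ∧
    (x ≠ y → Disjoint H₁.verts H₂.verts)

/-- A finite connected graph with minimum degree at least 2 is 2-connected or an
`(H₁,H₂)`-dumbbell for some connected plates `H₁`, `H₂` of minimum degree at least 2. -/
theorem stmt_6 {V : Type*} [Fintype V] [DecidableEq V] (G : SimpleGraph V)
    (hconn : G.Connected) (hdeg : ∀ v : V, 2 ≤ (G.neighborSet v).ncard) :
    TwoConnected G ∨
      ∃ H₁ H₂ : G.Subgraph, IsDumbbell G H₁ H₂ ∧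
        H₁.coe.Connected ∧ H₂.coe.Connected ∧
        (∀ v ∈ H₁.verts, 2 ≤ (H₁.neighborSet v).ncard) ∧
        (∀ v ∈ H₂.verts, 2 ≤ (H₂.neighborSet v).ncard) := by
  classical
  -- |V| ≥ 3
  have hcard3 : 3 ≤ Fintype.card V := by
    obtain ⟨v₀⟩ := hconn.nonempty
    have h2 : 1 < (G.neighborSet v₀).ncard := lt_of_lt_of_le one_lt_two (hdeg v₀)
    obtain ⟨a1, ha1, b1, hb1, hab1⟩ := (Set.one_lt_ncard (Set.toFinite _)).mp h2
    have hna : v₀ ≠ a1 := (ha1 : G.Adj v₀ a1).ne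
    have hnb : v₀ ≠ b1 := (hb1 : G.Adj v₀ b1).ne
    have h3 : ({v₀, a1, b1} : Set V).ncard = 3 := by
      rw [Set.ncard_insert_of_notMem (by simp [hna, hnb]) (Set.toFinite _),
        Set.ncard_insert_of_notMem (by simp [hab1]) (Set.toFinite _), Set.ncard_singleton]
    calc 3 = ({v₀, a1, b1} : Set V).ncard := h3.symm
      _ ≤ (Set.univ : Set V).ncard := Set.ncard_le_ncard (Set.subset_univ _) (Set.toFinite _)
      _ = Fintype.card V := by rw [Set.ncard_univ, Nat.card_eq_fintype_card]
  by_cases h2c : TwoConnected G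
  · exact Or.inl h2c
  right
  -- extract a cut vertex v
  obtain ⟨v, hv⟩ : ∃ v : V, ¬ (G.induce {u | u ≠ v}).Connected := by
    by_contra h
    push_neg at h
    exact h2c ⟨hconn, hcard3, h⟩
  have hnonempty : Nonempty {u // u ∈ {u' : V | u' ≠ v}} := by
    have : Nontrivial V := Fintype.one_lt_card_iff_nontrivial.mp (by omega)
    obtain ⟨u, hu⟩ := exists_ne v
    exact ⟨⟨u, hu⟩⟩
  rw [connected_iff] at hv
  have hnp : ¬ (G.induce {u' : V | u' ≠ v}).Preconnected := fun h => hv ⟨h, hnonempty⟩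
  rw [SimpleGraph.Preconnected] at hnp
  push_neg at hnp
  obtain ⟨⟨a₀, ha₀⟩, ⟨b₀, hb₀⟩, hnr⟩ := hnp
  -- the two sides A and B
  set A : Set V := {u | ∃ p : G.Walk a₀ u, v ∉ p.support} with hAdef
  have haA : a₀ ∈ A := ⟨Walk.nil, by simp [Ne.symm ha₀]⟩
  have hvA : v ∉ A := fun ⟨p, hp⟩ => hp p.end_mem_support
  have hclA : ∀ b ∈ A, ∀ z, G.Adj b z → z ∈ insert v A := by
    intro b hb z hz
    by_cases hzv : z = v
    · exact Or.inl hzv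
    obtain ⟨p, hp⟩ := hb
    refine Or.inr ⟨p.concat hz, ?_⟩
    rw [Walk.support_concat]
    intro hmem
    rcases List.mem_append.mp hmem with h | h
    · exact hp h
    · exact hzv (List.mem_singleton.mp h).symm
  have hbA : b₀ ∉ A := by
    rintro ⟨p, hp⟩
    have hsub : ∀ u ∈ p.support, u ∈ {u' : V | u' ≠ v} := fun u hu (he : u = v) => hp (he ▸ hu)
    exact hnr (reach_induce p hsub ha₀ hb₀)
  set B : Set V := {u | u ≠ v ∧ u ∉ A} with hBdef
  have hbB : b₀ ∈ B := ⟨hb₀, hbA⟩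
  have hvB : v ∉ B := fun h => h.1 rfl
  have hclB : ∀ b ∈ B, ∀ z, G.Adj b z → z ∈ insert v B := by
    intro b hb z hz
    by_cases hzv : z = v
    · exact Or.inl hzv
    by_cases hzA : z ∈ A
    · rcases hclA z hzA b hz.symm with h | h
      · exact absurd h hb.1
      · exact absurd h hb.2
    · exact Or.inr ⟨hzv, hzA⟩
  have hAB : ∀ u, u ∈ A → u ∈ B → False := fun u h1 h2 => h2.2 h1
  have cover : ∀ u : V, u = v ∨ u ∈ A ∨ u ∈ B := by
    intro u
    by_cases h1 : u = v
    · exact Or.inl h1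
    by_cases h2 : u ∈ A
    · exact Or.inr (Or.inl h2)
    · exact Or.inr (Or.inr ⟨h1, h2⟩)
  have hnbA : ∃ z ∈ A, G.Adj v z := by
    obtain ⟨p⟩ := hconn v a₀
    exact exists_adj_of_walk hclA p haA hvA
  have hnbB : ∃ z ∈ B, G.Adj v z := by
    obtain ⟨p⟩ := hconn v b₀
    exact exists_adj_of_walk hclB p hbB hvB
  -- apply the main claim on both sides
  obtain ⟨x, P₁, S₁, a1P, a2, a3, a4, a5, a6, a7, a8, a9, a10, a11⟩ :=
    claim hconn hdeg A.ncard A v le_rfl hvA ⟨a₀, haA⟩ hclA hnbA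
  obtain ⟨y, P₂, S₂, b1P, b2, b3, b4, b5, b6, b7, b8, b9, b10, b11⟩ :=
    claim hconn hdeg B.ncard B v le_rfl hvB ⟨b₀, hbB⟩ hclB hnbB
  have hS12 : ∀ u, u ∈ S₁ → u ∈ S₂ → u = v := by
    intro u h1 h2
    rcases a3 h1 with rfl | h1'
    · rfl
    rcases b3 h2 with rfl | h2'
    · rfl
    exact (hAB u h1' h2').elim
  set P : G.Walk x y := P₁.reverse.append P₂ with hPdef
  have hsupP : ∀ u, u ∈ P.support ↔ (u ∈ P₁.support ∨ u ∈ P₂.support) := by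
    intro u
    rw [hPdef, Walk.mem_support_append_iff, Walk.support_reverse, List.mem_reverse]
  have hP2cons : P₂.support = v :: P₂.support.tail := Walk.support_eq_cons P₂
  have hvtail : v ∉ P₂.support.tail := by
    have := b1P.support_nodup
    rw [hP2cons] at this
    exact (List.nodup_cons.mp this).1
  have hpath : P.IsPath := by
    rw [Walk.isPath_def, hPdef, Walk.support_append, Walk.support_reverse]
    refine List.Nodup.append (List.nodup_reverse.mpr a1P.support_nodup)
      ((Walk.support_eq_cons P₂ ▸ b1P.support_nodup).of_cons) ?_
    intro u hu1 hu2
    have huA : u ∈ insert v A := a2 u (List.mem_reverse.mp hu1)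
    have huB : u ∈ insert v B := b2 u (List.mem_of_mem_tail hu2)
    have hunv : u ≠ v := fun h => hvtail (h ▸ hu2)
    rcases huA with rfl | huA
    · exact hunv rfl
    rcases huB with rfl | huB
    · exact hunv rfl
    exact hAB u huA huB
  -- degree of v is exactly two when both handles are nontrivial
  have hdegv : (G.neighborSet v ∩ A).ncard = 1 → (G.neighborSet v ∩ B).ncard = 1 →
      (G.neighborSet v).ncard = 2 := by
    intro h1 h2
    have hsplit : G.neighborSet v = (G.neighborSet v ∩ A) ∪ (G.neighborSet v ∩ B) := by
      ext z
      constructor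
      · intro hz
        have hzv : z ≠ v := (hz : G.Adj v z).ne'
        rcases cover z with rfl | h | h
        · exact absurd rfl hzv
        · exact Or.inl ⟨hz, h⟩
        · exact Or.inr ⟨hz, h⟩
      · rintro (⟨h, _⟩ | ⟨h, _⟩) <;> exact h
    rw [hsplit, Set.ncard_union_eq (Set.disjoint_left.mpr fun z hz1 hz2 => hAB z hz1.2 hz2.2)
      (Set.toFinite _) (Set.toFinite _), h1, h2]
  refine ⟨(⊤ : G.Subgraph).induce S₁, (⊤ : G.Subgraph).induce S₂,
    ⟨?_, x, y, P, hpath, ?_, ?_, ?_, ?_, ?_⟩, ?_, ?_, ?_, ?_⟩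
  · -- subsingleton of intersection
    rintro u ⟨hu1, hu2⟩ w ⟨hw1, hw2⟩
    simp only [Subgraph.induce_verts] at hu1 hu2 hw1 hw2
    rw [hS12 u hu1 hu2, hS12 w hw1 hw2]
  · -- internal vertices have degree two
    intro u hu hux huy
    by_cases huv : u = v
    · subst huv
      have hn1 : ¬ P₁.Nil := fun hn => hux hn.eq
      have hn2 : ¬ P₂.Nil := fun hn => huy hn.eq
      exact hdegv (a8 hn1).2 (b8 hn2).2
    · rcases (hsupP u).mp hu with h | h
      · exact a7 u h huv hux
      · exact b7 u h huv huy
  · -- the union is everything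
    apply le_antisymm le_top
    have edgekey : ∀ u w, G.Adj u w → w ≠ v →
        ((⊤ : G.Subgraph).induce S₁ ⊔ (⊤ : G.Subgraph).induce S₂ ⊔ P.toSubgraph).Adj u w := by
      intro u w huw hwv
      have hPsub : P.toSubgraph = P₁.toSubgraph ⊔ P₂.toSubgraph := by
        rw [hPdef, Walk.toSubgraph_append, Walk.toSubgraph_reverse]
      simp only [Subgraph.sup_adj, Subgraph.induce_adj, Subgraph.top_adj, hPsub]
      rcases cover w with rfl | h | h
      · exact absurd rfl hwv
      · rcases a10 u w huw h with ⟨h1, h2⟩ | h'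
        · exact Or.inl (Or.inl ⟨h1, h2, huw⟩)
        · exact Or.inr (Or.inl h')
      · rcases b10 u w huw h with ⟨h1, h2⟩ | h'
        · exact Or.inl (Or.inr ⟨h1, h2, huw⟩)
        · exact Or.inr (Or.inr h')
    constructor
    · intro u _
      simp only [Subgraph.verts_sup, Subgraph.induce_verts, Walk.verts_toSubgraph,
        Set.mem_union, Set.mem_setOf_eq]
      rcases cover u with rfl | h | h
      · exact Or.inr ((hsupP u).mpr (Or.inl P₁.start_mem_support))
      · rcases a6 u (Or.inr h) with h' | h'
        · exact Or.inl (Or.inl h')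
        · exact Or.inr ((hsupP u).mpr (Or.inl h'))
      · rcases b6 u (Or.inr h) with h' | h'
        · exact Or.inl (Or.inr h')
        · exact Or.inr ((hsupP u).mpr (Or.inr h'))
    · intro u w huw
      have huw' : G.Adj u w := huw
      by_cases hwv : w = v
      · subst hwv
        exact (edgekey w u huw'.symm huw'.ne).symm
      · exact edgekey u w huw' hwv
  · -- H₁.verts ∩ support = {x}
    ext u
    simp only [Subgraph.induce_verts, Set.mem_inter_iff, Set.mem_setOf_eq,
      Set.mem_singleton_iff]
    constructor
    · rintro ⟨hu1, hu2⟩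
      rcases (hsupP u).mp hu2 with h | h
      · exact a5 u hu1 h
      · have huv : u = v := by
          rcases a3 hu1 with rfl | hA'
          · rfl
          rcases b2 u h with rfl | hB'
          · rfl
          exact (hAB u hA' hB').elim
        subst huv
        by_cases hnil : P₁.Nil
        · exact hnil.eq
        · exact absurd hu1 (a8 hnil).1
    · intro h
      subst h
      exact ⟨a4, (hsupP _).mpr (Or.inl P₁.end_mem_support)⟩
  · -- H₂.verts ∩ support = {y}
    ext u
    simp only [Subgraph.induce_verts, Set.mem_inter_iff, Set.mem_setOf_eq,
      Set.mem_singleton_iff]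
    constructor
    · rintro ⟨hu1, hu2⟩
      rcases (hsupP u).mp hu2 with h | h
      · have huv : u = v := by
          rcases b3 hu1 with rfl | hB'
          · rfl
          rcases a2 u h with rfl | hA'
          · rfl
          exact (hAB u hA' hB').elim
        subst huv
        by_cases hnil : P₂.Nil
        · exact hnil.eq
        · exact absurd hu1 (b8 hnil).1
      · exact b5 u hu1 h
    · intro h
      subst h
      exact ⟨b4, (hsupP _).mpr (Or.inr P₂.end_mem_support)⟩
  · -- disjointness when x ≠ y
    intro hxy
    simp only [Subgraph.induce_verts]
    rw [Set.disjoint_left]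
    intro u hu1 hu2
    have huv : u = v := hS12 u hu1 hu2
    subst huv
    by_cases hnil : P₁.Nil
    · have hn2 : ¬ P₂.Nil := fun hn => hxy (hnil.eq ▸ hn.eq ▸ rfl)
      exact (b8 hn2).1 hu2
    · exact (a8 hnil).1 hu1
  · -- H₁ connected
    rw [connected_iff]
    refine ⟨?_, ⟨⟨x, a4⟩⟩⟩
    rintro ⟨u, hu⟩ ⟨w, hw⟩
    obtain ⟨p, hp⟩ := a11 u hu w hw
    exact reach_coe_induce p hp hu hw
  · -- H₂ connected
    rw [connected_iff]
    refine ⟨?_, ⟨⟨y, b4⟩⟩⟩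
    rintro ⟨u, hu⟩ ⟨w, hw⟩
    obtain ⟨p, hp⟩ := b11 u hu w hw
    exact reach_coe_induce p hp hu hw
  · -- degrees in H₁
    intro u hu
    simp only [Subgraph.induce_verts] at hu
    have hEq : ((⊤ : G.Subgraph).induce S₁).neighborSet u = G.neighborSet u ∩ S₁ := by
      ext z
      simp only [Subgraph.mem_neighborSet, Subgraph.induce_adj, Subgraph.top_adj,
        Set.mem_inter_iff, SimpleGraph.mem_neighborSet]
      tauto
    rw [hEq]
    exact a9 u hu
  · -- degrees in H₂
    intro u hu
    simp only [Subgraph.induce_verts] at hu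
    have hEq : ((⊤ : G.Subgraph).induce S₂).neighborSet u = G.neighborSet u ∩ S₂ := by
      ext z
      simp only [Subgraph.mem_neighborSet, Subgraph.induce_adj, Subgraph.top_adj,
        Set.mem_inter_iff, SimpleGraph.mem_neighborSet]
      tauto
    rw [hEq]
    exact b9 u hu
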